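/- Let n ≥ 2, q > 1, ψ as above, and u a positive C² solution of -(ψ^{n-1}u')' = ψ^{n-1}u^q on (0,∞) with u'(0)=0. Define P_u(r) = (∫₀^r ψ^{n-1} ds)·[ (1/2)|u'(r)|² + u(r)^{q+1}/(q+1) ] + (ψ^{n-1}(r)/(q+1)) u(r) u'(r). Then P_u'(r) = ψ^{n-1}(r) [ 1/2 + 1/(q+1) - (n-1)(ψ'(r)/ψ^n(r)) ∫₀^r ψ^{n-1} ds ] |u'(r)|² for all r > 0. -/

import Mathlib

open Set Filter intervalIntegral

/-- Derivative formula (4.2) for the Pohozaev function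
`P_u(r) = (∫₀^r ψ^{n-1})·[½|u'|² + u^{q+1}/(q+1)] + (ψ^{n-1}/(q+1)) u u'`:
`P_u'(r) = ψ^{n-1}(r)[½ + 1/(q+1) - (n-1)(ψ'/ψ^n)∫₀^r ψ^{n-1}] |u'(r)|²`. -/
theorem pohozaev_derivative_formula (n : ℕ) (hn : 2 ≤ n) (q : ℝ) (hq : 1 < q)
    (ψ : ℝ → ℝ)
    (hψcont : ContinuousOn ψ (Ici 0))
    (hψC1 : ContDiffOn ℝ 1 ψ (Ioi 0))
    (hψpos : ∀ r > (0:ℝ), 0 < ψ r)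
    (hψ0 : Tendsto (fun r => ψ r / r) (nhdsWithin 0 (Ioi 0)) (nhds 1))
    (u : ℝ → ℝ) (hu : ContDiff ℝ 2 u)
    (hupos : ∀ r : ℝ, 0 ≤ r → 0 < u r)
    (hu'0 : deriv u 0 = 0)
    (heq : ∀ r > (0:ℝ),
      -deriv (fun s => ψ s ^ (n - 1) * deriv u s) r = ψ r ^ (n - 1) * u r ^ q) :
    ∀ r > (0:ℝ),
      deriv (fun t => (∫ s in (0:ℝ)..t, ψ s ^ (n - 1)) *
            ((1 / 2) * (deriv u t) ^ 2 + u t ^ (q + 1) / (q + 1))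
          + ψ t ^ (n - 1) / (q + 1) * u t * deriv u t) r
        = ψ r ^ (n - 1) *
            (1 / 2 + 1 / (q + 1)
              - (n - 1 : ℝ) * (deriv ψ r / ψ r ^ n) * ∫ s in (0:ℝ)..r, ψ s ^ (n - 1))
            * (deriv u r) ^ 2 := by
  obtain ⟨m, rfl⟩ : ∃ m, n = m + 2 := ⟨n - 2, by omega⟩
  simp only [show m + 2 - 1 = m + 1 from rfl] at *
  intro r hr
  have hψr : 0 < ψ r := hψpos r hr
  have hur : 0 < u r := hupos r hr.le
  have hq1 : (q : ℝ) + 1 ≠ 0 := by linarith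
  have hψdiff : HasDerivAt ψ (deriv ψ r) r :=
    ((hψC1.contDiffAt (isOpen_Ioi.mem_nhds hr)).differentiableAt one_ne_zero).hasDerivAt
  have hu1 : ContDiff ℝ 1 (deriv u) := (contDiff_succ_iff_deriv.mp (show ContDiff ℝ (1+1) u by norm_num; exact_mod_cast hu)).2.2
  have hu'diff : HasDerivAt (deriv u) (deriv (deriv u) r) r :=
    ((hu1.differentiable one_ne_zero) r).hasDerivAt
  have hudiff : HasDerivAt u (deriv u r) r := ((hu.differentiable (by norm_num)) r).hasDerivAt
  -- FTC part
  have hcontpow : ContinuousOn (fun s => ψ s ^ (m + 1)) (Ici (0:ℝ)) := hψcont.pow _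
  have hint : IntervalIntegrable (fun s => ψ s ^ (m + 1)) MeasureTheory.volume 0 r := by
    apply ContinuousOn.intervalIntegrable
    apply hcontpow.mono
    rw [uIcc_of_le hr.le]
    exact Icc_subset_Ici_self
  have hmeas : StronglyMeasurableAtFilter (fun s => ψ s ^ (m + 1)) (nhds r) := by
    have : Ici (0:ℝ) ∈ nhds r := Ici_mem_nhds hr
    exact ⟨Ici 0, this, (hcontpow.aestronglyMeasurable measurableSet_Ici)⟩
  have hcr : ContinuousAt (fun s => ψ s ^ (m + 1)) r :=
    ((hψC1.continuousOn.continuousAt (isOpen_Ioi.mem_nhds hr))).pow _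
  have hF : HasDerivAt (fun t => ∫ s in (0:ℝ)..t, ψ s ^ (m + 1)) (ψ r ^ (m + 1)) r :=
    intervalIntegral.integral_hasDerivAt_right hint hmeas hcr
  -- the ODE
  have hprod : HasDerivAt (fun s => ψ s ^ (m + 1) * deriv u s)
      ((↑(m + 1) * ψ r ^ m * deriv ψ r) * deriv u r + ψ r ^ (m + 1) * deriv (deriv u) r) r :=
    (hψdiff.pow (m + 1)).mul hu'diff
  have key := heq r hr
  rw [hprod.deriv] at key
  have hu'' : deriv (deriv u) r =
      (-(ψ r ^ (m + 1) * u r ^ q) - ↑(m + 1) * ψ r ^ m * deriv ψ r * deriv u r) /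
        ψ r ^ (m + 1) := by
    field_simp
    push_cast at key ⊢
    linarith [key]
  -- full derivative
  have hE : HasDerivAt (fun t => (1 / 2) * (deriv u t) ^ 2 + u t ^ (q + 1) / (q + 1))
      ((1 / 2) * (2 * deriv u r ^ 1 * deriv (deriv u) r) +
        (deriv u r * (q + 1) * u r ^ (q + 1 - 1)) / (q + 1)) r :=
    ((hu'diff.pow 2).const_mul (1 / 2)).add
      ((hudiff.rpow_const (Or.inl (ne_of_gt hur))).div_const (q + 1))
  have hG : HasDerivAt (fun t => ψ t ^ (m + 1) / (q + 1) * u t * deriv u t)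
      (((↑(m + 1) * ψ r ^ m * deriv ψ r) / (q + 1) * u r + ψ r ^ (m + 1) / (q + 1) * deriv u r)
          * deriv u r + ψ r ^ (m + 1) / (q + 1) * u r * deriv (deriv u) r) r :=
    ((((hψdiff.pow (m + 1)).div_const (q + 1)).mul hudiff).mul hu'diff)
  have hall := (hF.mul hE).add hG
  rw [HasDerivAt.deriv (f := fun t => (∫ s in (0:ℝ)..t, ψ s ^ (m + 1)) * ((1 / 2) * (deriv u t) ^ 2 + u t ^ (q + 1) / (q + 1)) + ψ t ^ (m + 1) / (q + 1) * u t * deriv u t) hall]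
  have hrpow : u r ^ (q + 1) = u r ^ q * u r := Real.rpow_add_one (ne_of_gt hur) q
  have hq1' : q + 1 - 1 = q := by ring
  rw [hq1', hrpow, hu'']
  have hψn : ψ r ^ (m + 2) = ψ r ^ (m + 1) * ψ r := pow_succ _ _
  rw [hψn]
  have hψm : ψ r ^ (m + 1) = ψ r ^ m * ψ r := pow_succ _ _
  field_simp
  push_cast
  ring
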